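/- Let X be a set, Y a nonempty subset of X, and S(Y) a subsemigroup of T(Y) containing I_Y. Let f ∈ T_{S(Y)}(X). Then f is unit-regular in T_{S(Y)}(X) if and only if (i) f↾Y is unit-regular in S(Y), (ii) R(f) ∩ Y = R(f↾Y), and (iii) |C(f) \ C(f↾Y)| = |D(f) \ D(f↾Y)|, where C(f) = X \ T_f and C(f↾Y) = Y \ T_{f↾Y} for some transversals T_f of ker(f) and T_{f↾Y} of ker(f↾Y) with Y ∩ T_f = T_{f↾Y}, and D(f) = X \ R(f), D(f↾Y) = Y \ R(f↾Y). -/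
import Mathlib


open Set Function

/-- `S` is a subsemigroup of the full transformation semigroup on `A`
(closed under composition; composition order is irrelevant here since we
quantify over all ordered pairs). -/
def IsSubsemigroupOn {A : Type*} (S : Set (A → A)) : Prop :=
  ∀ a ∈ S, ∀ b ∈ S, a ∘ b ∈ S

/-- `S` is a subgroup of `Sym(A)`. -/
def IsSubgroupOfSym {A : Type*} (S : Set (A → A)) : Prop :=
  IsSubsemigroupOn S ∧ (∀ a ∈ S, Function.Bijective a) ∧ (id ∈ S) ∧
    ∀ a ∈ S, ∃ b ∈ S, a ∘ b = id ∧ b ∘ a = id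

/-- `S` is a regular semigroup of transformations: every `a ∈ S` has `b ∈ S`
with `aba = a` (composed left to right, i.e. `x ↦ a (b (a x))`). -/
def IsRegularOn {A : Type*} (S : Set (A → A)) : Prop :=
  ∀ a ∈ S, ∃ b ∈ S, a ∘ b ∘ a = a

/-- `S` is an inverse semigroup of transformations. -/
def IsInverseOn {A : Type*} (S : Set (A → A)) : Prop :=
  ∀ a ∈ S, ∃! b, b ∈ S ∧ a ∘ b ∘ a = a ∧ b ∘ a ∘ b = b

/-- `u` is a unit of the transformation monoid `S`. -/
def IsUnitOn {A : Type*} (S : Set (A → A)) (u : A → A) : Prop :=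
  u ∈ S ∧ ∃ v ∈ S, u ∘ v = id ∧ v ∘ u = id

/-- `a` is a unit-regular element of `S`. -/
def UnitRegularElem {A : Type*} (S : Set (A → A)) (a : A → A) : Prop :=
  ∃ u, IsUnitOn S u ∧ a ∘ u ∘ a = a

/-- `S` is a unit-regular transformation monoid. -/
def IsUnitRegularOn {A : Type*} (S : Set (A → A)) : Prop :=
  ∀ a ∈ S, UnitRegularElem S a

/-- `T` is a transversal of `ker f`: it contains exactly one element of
each kernel class. -/
def IsTransversalOf {A : Type*} (f : A → A) (T : Set A) : Prop :=
  ∀ x : A, ∃! t, t ∈ T ∧ f t = f x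

/-- `T'` is a transversal of the kernel of the restriction of `f` to `Y`,
viewed inside the ambient set. -/
def IsTransversalOfOn {A : Type*} (f : A → A) (Y T' : Set A) : Prop :=
  T' ⊆ Y ∧ ∀ y ∈ Y, ∃! t, t ∈ T' ∧ f t = f y

/-- The semigroup `T_{S(Y)}(X)` of all transformations of `X` that leave `Y`
invariant and whose restriction-corestriction to `Y` lies in `S`. -/
def TSemi {X : Type*} (Y : Set X) (S : Set (Y → Y)) : Set (X → X) :=
  {f | ∃ h : MapsTo f Y Y, MapsTo.restrict f Y Y h ∈ S}

/-- Auxiliary set identity. -/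
lemma compl_diff_eq_aux {X : Type*} {R U V : Set X} (h : V ⊆ R) :
    Rᶜ \ (U \ V) = (R ∪ U)ᶜ := by
  ext x
  simp only [Set.mem_diff, Set.mem_compl_iff, Set.mem_union, not_or, not_and, not_not]
  constructor
  · rintro ⟨hxR, hx⟩
    exact ⟨hxR, fun hxU => hxR (h (hx hxU))⟩
  · rintro ⟨hxR, hxU⟩
    exact ⟨hxR, fun h' => absurd h' hxU⟩

theorem stmt5 {X : Type*} (Y : Set X) (S : Set (Y → Y)) (hY : Y.Nonempty)
    (hS : IsSubsemigroupOn S) (hid : id ∈ S)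
    (f : X → X) (hm : MapsTo f Y Y) (hf : MapsTo.restrict f Y Y hm ∈ S) :
    UnitRegularElem (TSemi Y S) f ↔
      (UnitRegularElem S (MapsTo.restrict f Y Y hm) ∧
       Set.range f ∩ Y = f '' Y ∧
       ∃ Tf T' : Set X, IsTransversalOf f Tf ∧ IsTransversalOfOn f Y T' ∧
         Y ∩ Tf = T' ∧
         Cardinal.mk ↥(Tfᶜ \ (Y \ T')) =
           Cardinal.mk ↥((Set.range f)ᶜ \ (Y \ f '' Y))) := by
  classical
  constructor
  · rintro ⟨u, ⟨⟨hum, huS⟩, v, ⟨hvm, hvS⟩, huv, hvu⟩, hfuf⟩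
    have huv' : ∀ x, u (v x) = x := fun x => congrFun huv x
    have hvu' : ∀ x, v (u x) = x := fun x => congrFun hvu x
    have hfuf' : ∀ x, f (u (f x)) = f x := fun x => congrFun hfuf x
    have hubij : Function.Bijective u :=
      ⟨Function.LeftInverse.injective hvu', fun x => ⟨v x, huv' x⟩⟩
    have huY : u '' Y = Y := by
      apply Subset.antisymm
      · rintro _ ⟨y, hy, rfl⟩; exact hum hy
      · intro y hy; exact ⟨v y, hvm hy, huv' y⟩
    have hrange : Set.range f ∩ Y = f '' Y := by
      apply Subset.antisymm
      · rintro z ⟨⟨x, rfl⟩, hzY⟩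
        exact ⟨u (f x), hum hzY, hfuf' x⟩
      · rintro _ ⟨y, hy, rfl⟩
        exact ⟨⟨y, rfl⟩, hm hy⟩
    refine ⟨⟨MapsTo.restrict u Y Y hum,
        ⟨huS, MapsTo.restrict v Y Y hvm, hvS, ?_, ?_⟩, ?_⟩, hrange, ?_⟩
    · funext y
      apply Subtype.ext
      simp only [comp_apply, MapsTo.val_restrict_apply, id_eq, huv']
    · funext y
      apply Subtype.ext
      simp only [comp_apply, MapsTo.val_restrict_apply, id_eq, hvu']
    · funext y
      apply Subtype.ext
      simp only [comp_apply, MapsTo.val_restrict_apply, hfuf']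
    · refine ⟨Set.range (u ∘ f), (u ∘ f) '' Y, ?_, ⟨?_, ?_⟩, ?_, ?_⟩
      · -- transversal of ker f on X
        intro x
        refine ⟨u (f x), ⟨⟨x, rfl⟩, hfuf' x⟩, ?_⟩
        rintro t ⟨⟨x', rfl⟩, hft⟩
        simp only [comp_apply] at hft ⊢
        rw [hfuf' x'] at hft
        rw [hft]
      · -- T' ⊆ Y
        rintro _ ⟨y, hy, rfl⟩
        exact hum (hm hy)
      · -- transversal of ker (f|Y)
        intro y hy
        refine ⟨u (f y), ⟨⟨y, hy, rfl⟩, hfuf' y⟩, ?_⟩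
        rintro t ⟨⟨y', hy', rfl⟩, hft⟩
        simp only [comp_apply] at hft ⊢
        rw [hfuf' y'] at hft
        rw [hft]
      · -- Y ∩ Tf = T'
        apply Subset.antisymm
        · rintro z ⟨hzY, x, rfl⟩
          simp only [comp_apply] at hzY ⊢
          have hfxY : f x ∈ Y := by
            have : v (u (f x)) ∈ Y := hvm hzY
            rwa [hvu'] at this
          have : f x ∈ f '' Y := by rw [← hrange]; exact ⟨⟨x, rfl⟩, hfxY⟩
          obtain ⟨y, hy, hfy⟩ := this
          exact ⟨y, hy, by simp only [comp_apply, hfy]⟩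
        · rintro _ ⟨y, hy, rfl⟩
          exact ⟨hum (hm hy), ⟨y, rfl⟩⟩
      · -- cardinal equality
        rw [compl_diff_eq_aux (Set.image_subset_range _ _),
            compl_diff_eq_aux (Set.image_subset_range _ _)]
        have himg : u '' ((Set.range f ∪ Y)ᶜ) = (Set.range (u ∘ f) ∪ Y)ᶜ := by
          rw [Set.image_compl_eq hubij, Set.image_union, huY, ← Set.range_comp]
        rw [← himg, Cardinal.mk_image_eq hubij.injective]
  · rintro ⟨⟨u₀, ⟨hu₀S, v₀, hv₀S, huv₀, hvu₀⟩, hcomp⟩, hrange, Tf, T', hTf,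
      ⟨hT'Y, hT'⟩, hYT, hcard⟩
    have hu₀v₀ : ∀ y, u₀ (v₀ y) = y := fun y => congrFun huv₀ y
    have hv₀u₀ : ∀ y, v₀ (u₀ y) = y := fun y => congrFun hvu₀ y
    have hT'Tf : T' ⊆ Tf := fun t ht => by rw [← hYT] at ht; exact ht.2
    choose τ hτ using fun x => (hTf x).exists
    have hτu : ∀ x t, t ∈ Tf → f t = f x → t = τ x := fun x t ht hfx =>
      (hTf x).unique ⟨ht, hfx⟩ ⟨(hτ x).1, (hτ x).2⟩
    have hmemT' : ∀ t ∈ Tf, f t ∈ Y → t ∈ T' := by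
      intro t ht hfty
      have hfim : f t ∈ f '' Y := by rw [← hrange]; exact ⟨⟨t, rfl⟩, hfty⟩
      obtain ⟨y, hy, hfy⟩ := hfim
      obtain ⟨s, ⟨hsT', hfs⟩, -⟩ := hT' y hy
      have h1 : s = τ t := hτu t s (hT'Tf hsT') (by rw [hfs, hfy])
      have h2 : t = τ t := hτu t t ht rfl
      rw [h2, ← h1]
      exact hsT'
    have hkey : ∀ (z : X) (hz : z ∈ Y), z ∈ f '' Y →
        f ((u₀ ⟨z, hz⟩ : Y) : X) = z := by
      intro z hz hzim
      obtain ⟨y, hy, hfy⟩ := hzim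
      have hc := congrFun hcomp ⟨y, hy⟩
      have h2 : (MapsTo.restrict f Y Y hm ⟨y, hy⟩ : Y) = ⟨z, hz⟩ :=
        Subtype.ext (by rw [MapsTo.val_restrict_apply]; exact hfy)
      rw [Subtype.ext_iff] at hc
      simp only [comp_apply, MapsTo.val_restrict_apply] at hc
      rw [h2] at hc
      rw [hc, hfy]
    rw [compl_diff_eq_aux hT'Tf,
        compl_diff_eq_aux (Set.image_subset_range _ _)] at hcard
    obtain ⟨e⟩ := Cardinal.eq.mp hcard
    have pfB : ∀ x, x ∉ Y → x ∉ Set.range f → x ∈ (Set.range f ∪ Y)ᶜ := by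
      intro x hx hr
      simp only [Set.mem_compl_iff, Set.mem_union, not_or]
      exact ⟨hr, hx⟩
    have pfA : ∀ x, x ∉ Y → x ∉ Tf → x ∈ (Tf ∪ Y)ᶜ := by
      intro x hx ht
      simp only [Set.mem_compl_iff, Set.mem_union, not_or]
      exact ⟨ht, hx⟩
    set w : X → X := fun x =>
      if hx : x ∈ Y then ((u₀ ⟨x, hx⟩ : Y) : X)
      else if hr : x ∈ Set.range f then τ (Classical.choose hr)
      else ((e.symm ⟨x, pfB x hx hr⟩ : ↥((Tf ∪ Y)ᶜ)) : X) with hw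
    set w' : X → X := fun x =>
      if hx : x ∈ Y then ((v₀ ⟨x, hx⟩ : Y) : X)
      else if ht : x ∈ Tf then f x
      else ((e ⟨x, pfA x hx ht⟩ : ↥((Set.range f ∪ Y)ᶜ)) : X) with hw'
    have hwY : ∀ (x) (hx : x ∈ Y), w x = ((u₀ ⟨x, hx⟩ : Y) : X) := by
      intro x hx; simp only [hw]; rw [dif_pos hx]
    have hw'Y : ∀ (x) (hx : x ∈ Y), w' x = ((v₀ ⟨x, hx⟩ : Y) : X) := by
      intro x hx; simp only [hw']; rw [dif_pos hx]
    have hwR : ∀ (x) (hx : x ∉ Y) (hr : x ∈ Set.range f),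
        w x ∈ Tf ∧ f (w x) = x := by
      intro x hx hr
      simp only [hw]
      rw [dif_neg hx, dif_pos hr]
      refine ⟨(hτ _).1, ?_⟩
      rw [(hτ _).2, Classical.choose_spec hr]
    have hwRY : ∀ (x) (hx : x ∉ Y) (hr : x ∈ Set.range f), w x ∉ Y := by
      intro x hx hr hmem
      exact hx (by rw [← (hwR x hx hr).2]; exact hm hmem)
    have hwC : ∀ (x) (hx : x ∉ Y) (hr : x ∉ Set.range f),
        w x = ((e.symm ⟨x, pfB x hx hr⟩ : ↥((Tf ∪ Y)ᶜ)) : X) := by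
      intro x hx hr; simp only [hw]; rw [dif_neg hx, dif_neg hr]
    have hw'Tf : ∀ (x) (hx : x ∉ Y) (ht : x ∈ Tf), w' x = f x := by
      intro x hx ht; simp only [hw']; rw [dif_neg hx, dif_pos ht]
    have hw'C : ∀ (x) (hx : x ∉ Y) (ht : x ∉ Tf),
        w' x = ((e ⟨x, pfA x hx ht⟩ : ↥((Set.range f ∪ Y)ᶜ)) : X) := by
      intro x hx ht; simp only [hw']; rw [dif_neg hx, dif_neg ht]
    -- w' ∘ w = id pointwise
    have hid2 : ∀ x, w' (w x) = x := by
      intro x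
      by_cases hx : x ∈ Y
      · rw [hwY x hx]
        have h1 : ((u₀ ⟨x, hx⟩ : Y) : X) ∈ Y := (u₀ ⟨x, hx⟩).2
        rw [hw'Y _ h1]
        have h2 : (⟨((u₀ ⟨x, hx⟩ : Y) : X), h1⟩ : Y) = u₀ ⟨x, hx⟩ := rfl
        rw [h2, hv₀u₀]
      · by_cases hr : x ∈ Set.range f
        · obtain ⟨htf, hfx⟩ := hwR x hx hr
          rw [hw'Tf _ (hwRY x hx hr) htf]
          exact hfx
        · rw [hwC x hx hr]
          have h2 : ((e.symm ⟨x, pfB x hx hr⟩ : ↥((Tf ∪ Y)ᶜ)) : X) ∈ (Tf ∪ Y)ᶜ :=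
            (e.symm ⟨x, pfB x hx hr⟩).2
          have hnT : ((e.symm ⟨x, pfB x hx hr⟩ : ↥((Tf ∪ Y)ᶜ)) : X) ∉ Tf :=
            fun h => h2 (Set.mem_union_left _ h)
          have hnY : ((e.symm ⟨x, pfB x hx hr⟩ : ↥((Tf ∪ Y)ᶜ)) : X) ∉ Y :=
            fun h => h2 (Set.mem_union_right _ h)
          rw [hw'C _ hnY hnT]
          have h3 : (⟨((e.symm ⟨x, pfB x hx hr⟩ : ↥((Tf ∪ Y)ᶜ)) : X),
              pfA _ hnY hnT⟩ : ↥((Tf ∪ Y)ᶜ)) = e.symm ⟨x, pfB x hx hr⟩ :=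
            Subtype.ext rfl
          rw [h3, e.apply_symm_apply]
    -- w ∘ w' = id pointwise
    have hid1 : ∀ x, w (w' x) = x := by
      intro x
      by_cases hx : x ∈ Y
      · rw [hw'Y x hx]
        have h1 : ((v₀ ⟨x, hx⟩ : Y) : X) ∈ Y := (v₀ ⟨x, hx⟩).2
        rw [hwY _ h1]
        have h2 : (⟨((v₀ ⟨x, hx⟩ : Y) : X), h1⟩ : Y) = v₀ ⟨x, hx⟩ := rfl
        rw [h2, hu₀v₀]
      · by_cases ht : x ∈ Tf
        · rw [hw'Tf x hx ht]
          have hnfY : f x ∉ Y := fun hz => hx (hT'Y (hmemT' x ht hz))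
          have h1 := hwR (f x) hnfY ⟨x, rfl⟩
          exact (hTf x).unique ⟨h1.1, h1.2⟩ ⟨ht, rfl⟩
        · rw [hw'C x hx ht]
          have h2 : ((e ⟨x, pfA x hx ht⟩ : ↥((Set.range f ∪ Y)ᶜ)) : X) ∈
              (Set.range f ∪ Y)ᶜ := (e ⟨x, pfA x hx ht⟩).2
          have hnR : ((e ⟨x, pfA x hx ht⟩ : ↥((Set.range f ∪ Y)ᶜ)) : X) ∉ Set.range f :=
            fun h => h2 (Set.mem_union_left _ h)
          have hnY : ((e ⟨x, pfA x hx ht⟩ : ↥((Set.range f ∪ Y)ᶜ)) : X) ∉ Y :=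
            fun h => h2 (Set.mem_union_right _ h)
          rw [hwC _ hnY hnR]
          have h3 : (⟨((e ⟨x, pfA x hx ht⟩ : ↥((Set.range f ∪ Y)ᶜ)) : X),
              pfB _ hnY hnR⟩ : ↥((Set.range f ∪ Y)ᶜ)) = e ⟨x, pfA x hx ht⟩ :=
            Subtype.ext rfl
          rw [h3, e.symm_apply_apply]
    -- f ∘ w ∘ f = f pointwise
    have hfwf : ∀ x, f (w (f x)) = f x := by
      intro x
      by_cases hz : f x ∈ Y
      · rw [hwY _ hz]
        refine hkey (f x) hz ?_
        rw [← hrange]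
        exact ⟨⟨x, rfl⟩, hz⟩
      · exact (hwR (f x) hz ⟨x, rfl⟩).2
    have hwmap : MapsTo w Y Y := fun x hx => by
      rw [hwY x hx]; exact (u₀ ⟨x, hx⟩).2
    have hw'map : MapsTo w' Y Y := fun x hx => by
      rw [hw'Y x hx]; exact (v₀ ⟨x, hx⟩).2
    have hwres : MapsTo.restrict w Y Y hwmap = u₀ := by
      funext y
      apply Subtype.ext
      rw [MapsTo.val_restrict_apply, hwY y y.2]
    have hw'res : MapsTo.restrict w' Y Y hw'map = v₀ := by
      funext y
      apply Subtype.ext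
      rw [MapsTo.val_restrict_apply, hw'Y y y.2]
    refine ⟨w, ⟨⟨hwmap, by rw [hwres]; exact hu₀S⟩,
      w', ⟨hw'map, by rw [hw'res]; exact hv₀S⟩,
      funext fun x => hid1 x, funext fun x => hid2 x⟩,
      funext fun x => hfwf x⟩
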